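/- There exists a qutrit stabilizer state σ on ℂ³ such that (3 − √3)·σ − |H₊⟩⟨H₊| is positive semidefinite, where |H₊⟩ = ((1+√3)|0⟩ + |1⟩ + |2⟩)/√(2(3+√3)) is the H₊ state. Explicitly, σ = (1/2)(|v₀⟩⟨v₀| + |v₁⟩⟨v₁|) with |v₀⟩ = |0⟩ and |v₁⟩ = (|0⟩ + |1⟩ + |2⟩)/√3 has this property, and each |v_j⟩ is a pure stabilizer state. -/

import Mathlib

open Matrix Complex BigOperators
open scoped ComplexOrder

noncomputable section

namespace Magic

/-- ω = exp(2πi/d) -/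
def omegaC (d : ℕ) : ℂ := Complex.exp (2 * Real.pi * Complex.I / d)

/-- τ = exp((d+1)πi/d) -/
def tauC (d : ℕ) : ℂ := Complex.exp ((d + 1) * Real.pi * Complex.I / d)

/-- Shift operator X|j⟩ = |j⊕1⟩. -/
def shiftX (d : ℕ) [NeZero d] : Matrix (ZMod d) (ZMod d) ℂ :=
  Matrix.of fun r c => if r = c + 1 then 1 else 0

/-- Boost operator Z|j⟩ = ω^j |j⟩. -/
def boostZ (d : ℕ) [NeZero d] : Matrix (ZMod d) (ZMod d) ℂ :=
  Matrix.diagonal fun j => omegaC d ^ j.val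

/-- Heisenberg–Weyl operator T_u = τ^{-a₁a₂} Z^{a₁} X^{a₂}. -/
def HW (d : ℕ) [NeZero d] (u : ZMod d × ZMod d) : Matrix (ZMod d) (ZMod d) ℂ :=
  tauC d ^ (-((u.1.val * u.2.val : ℕ) : ℤ)) • (boostZ d ^ u.1.val * shiftX d ^ u.2.val)

/-- A₀ = (1/d) ∑_u T_u. -/
def A0 (d : ℕ) [NeZero d] : Matrix (ZMod d) (ZMod d) ℂ :=
  (d : ℂ)⁻¹ • ∑ u : ZMod d × ZMod d, HW d u

/-- Phase-space point operators A_u = T_u A₀ T_u†. -/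
def Apt (d : ℕ) [NeZero d] (u : ZMod d × ZMod d) : Matrix (ZMod d) (ZMod d) ℂ :=
  HW d u * A0 d * (HW d u)ᴴ

/-- Discrete Wigner function W_V(u) = tr(A_u V)/d. -/
def wig (d : ℕ) [NeZero d] (V : Matrix (ZMod d) (ZMod d) ℂ) (u : ZMod d × ZMod d) : ℂ :=
  (Apt d u * V).trace / d

/-- Wigner trace norm ‖V‖_{W,1} = ∑_u |W_V(u)|. -/
def wnorm1 (d : ℕ) [NeZero d] (V : Matrix (ZMod d) (ZMod d) ℂ) : ℝ :=
  ∑ u : ZMod d × ZMod d, ‖wig d V u‖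

/-- Wigner spectral norm ‖V‖_{W,∞} = d · max_u |W_V(u)|. -/
def wnormInf (d : ℕ) [NeZero d] (V : Matrix (ZMod d) (ZMod d) ℂ) : ℝ :=
  (d : ℝ) * ⨆ u : ZMod d × ZMod d, ‖wig d V u‖

end Magic

namespace Magic

/-- The Strange state |S⟩ = (|1⟩ - |2⟩)/√2. -/
def strange : ZMod 3 → ℂ :=
  fun j => if j = 1 then ((Real.sqrt 2)⁻¹ : ℝ)
    else if j = 2 then (-(Real.sqrt 2)⁻¹ : ℝ) else 0

/-- The Norrell state |N⟩ = (-|0⟩ + 2|1⟩ - |2⟩)/√6. -/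
def norrell : ZMod 3 → ℂ :=
  fun j => if j = 1 then ((2 / Real.sqrt 6 : ℝ) : ℂ) else ((-(Real.sqrt 6)⁻¹ : ℝ) : ℂ)

/-- The H₊ state |H₊⟩ = ((1+√3)|0⟩ + |1⟩ + |2⟩)/√(2(3+√3)). -/
def hplus : ZMod 3 → ℂ :=
  fun j => if j = 0 then (((1 + Real.sqrt 3) / Real.sqrt (2 * (3 + Real.sqrt 3)) : ℝ) : ℂ)
    else (((Real.sqrt (2 * (3 + Real.sqrt 3)))⁻¹ : ℝ) : ℂ)

/-- ξ = exp(2πi/9). -/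
def xi : ℂ := Complex.exp (2 * Real.pi * Complex.I / 9)

/-- The T state |T⟩ = (ξ|0⟩ + |1⟩ + ξ⁻¹|2⟩)/√3. -/
def tket : ZMod 3 → ℂ :=
  fun j => (if j = 0 then xi else if j = 1 then 1 else xi⁻¹) / ((Real.sqrt 3 : ℝ) : ℂ)

/-- The rank-one projector |ψ⟩⟨ψ|. -/
def projOf (ψ : ZMod 3 → ℂ) : Matrix (ZMod 3) (ZMod 3) ℂ :=
  Matrix.vecMulVec ψ (star ψ)

end Magic

namespace Magic

/-- A single-qudit Clifford unitary: a unitary mapping Heisenberg–Weyl operators to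
Heisenberg–Weyl operators up to phases under conjugation. -/
def IsClifford1 (d : ℕ) [NeZero d] (U : Matrix (ZMod d) (ZMod d) ℂ) : Prop :=
  Uᴴ * U = 1 ∧ U * Uᴴ = 1 ∧
  ∀ u : ZMod d × ZMod d, ∃ (θ : ℝ) (u' : ZMod d × ZMod d),
    U * HW d u * Uᴴ = Complex.exp (θ * Complex.I) • HW d u'

/-- The vector |0⟩. -/
def ket0 (d : ℕ) [NeZero d] : ZMod d → ℂ := fun j => if j = 0 then 1 else 0

/-- A pure stabilizer state vector: U|0⟩ for a Clifford unitary U. -/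
def IsPureStabVec (d : ℕ) [NeZero d] (ψ : ZMod d → ℂ) : Prop :=
  ∃ U : Matrix (ZMod d) (ZMod d) ℂ, IsClifford1 d U ∧ ψ = U.mulVec (ket0 d)

/-- A single-qudit stabilizer state: a convex combination of pure stabilizer states. -/
def IsStabState1 (d : ℕ) [NeZero d] (σ : Matrix (ZMod d) (ZMod d) ℂ) : Prop :=
  ∃ (m : ℕ) (p : Fin m → ℝ) (ψ : Fin m → ZMod d → ℂ),
    (∀ j, 0 ≤ p j) ∧ (∑ j, p j = 1) ∧ (∀ j, IsPureStabVec d (ψ j)) ∧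
    σ = ∑ j, (p j : ℂ) • Matrix.vecMulVec (ψ j) (star (ψ j))

end Magic

namespace Magic

/-- |v₀⟩ = |0⟩. -/
def v0vec : ZMod 3 → ℂ := fun j => if j = 0 then 1 else 0

/-- |v₁⟩ = (|0⟩ + |1⟩ + |2⟩)/√3. -/
def v1vec : ZMod 3 → ℂ := fun _ => (((Real.sqrt 3)⁻¹ : ℝ) : ℂ)

/-- σ = (1/2)(|v₀⟩⟨v₀| + |v₁⟩⟨v₁|). -/
def hplusSigma : Matrix (ZMod 3) (ZMod 3) ℂ :=
  (2 : ℂ)⁻¹ • (Matrix.vecMulVec v0vec (star v0vec) + Matrix.vecMulVec v1vec (star v1vec))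

/-! ### Auxiliary scalar lemmas -/

local notation "ω" => omegaC 3

lemma hω3 : ω ^ 3 = 1 := by
  rw [omegaC, ← Complex.exp_nat_mul]
  norm_num
  rw [show (3:ℂ) * (2 * Real.pi * Complex.I / 3) = 2 * Real.pi * Complex.I by ring]
  exact Complex.exp_two_pi_mul_I

lemma hωne : ω ≠ 1 := by
  rw [omegaC]
  norm_num
  rw [Complex.exp_eq_one_iff]
  push_neg
  intro n h
  have hπ : (2 * (Real.pi:ℂ) * Complex.I) ≠ 0 := by
    refine mul_ne_zero (mul_ne_zero two_ne_zero ?_) Complex.I_ne_zero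
    exact Complex.ofReal_ne_zero.2 Real.pi_ne_zero
  have h1 : ((n * 3 : ℤ) : ℂ) = ((1:ℤ) : ℂ) := by
    push_cast
    have h2 : (2 * (Real.pi:ℂ) * Complex.I) * ((n:ℂ) * 3) = (2 * (Real.pi:ℂ) * Complex.I) * 1 := by
      linear_combination (-3 : ℂ) * h
    linear_combination mul_left_cancel₀ hπ h2
  have h3 : (n * 3 : ℤ) = 1 := Int.cast_injective h1
  omega

lemma hsum : 1 + ω + ω ^ 2 = 0 := by
  have h : (ω - 1) * (1 + ω + ω ^ 2) = 0 := by linear_combination hω3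
  rcases mul_eq_zero.1 h with h | h
  · exact absurd (sub_eq_zero.1 h) hωne
  · exact h

lemma hτ : tauC 3 = ω ^ 2 := by
  rw [tauC, omegaC, ← Complex.exp_nat_mul]
  norm_num
  ring_nf

lemma hstar : starRingEnd ℂ ω = ω ^ 2 := by
  have h1 : starRingEnd ℂ ω = ω⁻¹ := by
    rw [omegaC, ← Complex.exp_conj, ← Complex.exp_neg]
    congr 1
    simp [map_div₀, Complex.conj_I, Complex.conj_ofReal, map_ofNat]
    ring
  rw [h1]
  exact inv_eq_of_mul_eq_one_right (by linear_combination hω3)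

lemma hω2' : ω ^ 2 = -1 - ω := by linear_combination hsum
lemma hω4 : ω ^ 4 = ω := by linear_combination ω * hω3
lemma hω5 : ω ^ 5 = ω ^ 2 := by linear_combination (ω^2) * hω3
lemma hω6 : ω ^ 6 = 1 := by linear_combination (ω^3+1) * hω3
lemma hω7 : ω ^ 7 = ω := by linear_combination (ω^4+ω) * hω3
lemma hω8 : ω ^ 8 = ω ^ 2 := by linear_combination (ω^5+ω^2) * hω3
lemma hω9 : ω ^ 9 = 1 := by linear_combination (ω^6+ω^3+1) * hω3
lemma hω10 : ω ^ 10 = ω := by linear_combination (ω^7+ω^4+ω) * hω3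
lemma hω11 : ω ^ 11 = ω ^ 2 := by linear_combination (ω^8+ω^5+ω^2) * hω3
lemma hω12 : ω ^ 12 = 1 := by linear_combination (ω^9+ω^6+ω^3+1) * hω3
lemma hω13 : ω ^ 13 = ω := by linear_combination (ω^10+ω^7+ω^4+ω) * hω3
lemma hω14 : ω ^ 14 = ω ^ 2 := by linear_combination (ω^11+ω^8+ω^5+ω^2) * hω3
lemma hω15 : ω ^ 15 = 1 := by linear_combination (ω^12+ω^9+ω^6+ω^3+1) * hω3
lemma hω16 : ω ^ 16 = ω := by linear_combination (ω^13+ω^10+ω^7+ω^4+ω) * hω3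
lemma hω17 : ω ^ 17 = ω ^ 2 := by linear_combination (ω^14+ω^11+ω^8+ω^5+ω^2) * hω3
lemma hω18 : ω ^ 18 = 1 := by linear_combination (ω^15+ω^12+ω^9+ω^6+ω^3+1) * hω3
lemma hω19 : ω ^ 19 = ω := by linear_combination (ω^16+ω^13+ω^10+ω^7+ω^4+ω) * hω3
lemma hω20 : ω ^ 20 = ω ^ 2 := by linear_combination (ω^17+ω^14+ω^11+ω^8+ω^5+ω^2) * hω3

lemma htauz (n : ℕ) : tauC 3 ^ (-(n:ℤ)) = ω ^ n := by
  rw [_root_.zpow_neg, zpow_natCast, hτ, ← inv_pow]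
  congr 1
  exact inv_eq_of_mul_eq_one_right (by linear_combination hω3)

lemma hc3 : (((Real.sqrt 3:ℝ)):ℂ) ^ 2 = 3 := by
  rw [← Complex.ofReal_pow]; norm_num [Real.sq_sqrt]
lemma hss : ((((Real.sqrt 3)⁻¹ : ℝ)) : ℂ) * ((((Real.sqrt 3)⁻¹ : ℝ)) : ℂ) = (3:ℂ)⁻¹ := by
  have h : (Real.sqrt 3)⁻¹ * (Real.sqrt 3)⁻¹ = (3:ℝ)⁻¹ := by
    rw [← mul_inv, Real.mul_self_sqrt (by norm_num : (0:ℝ) ≤ 3)]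
  rw [← Complex.ofReal_mul, h]
  push_cast
  ring
lemma hss2 : ((((Real.sqrt 3)⁻¹ : ℝ)) : ℂ) ^ 2 = (3:ℂ)⁻¹ := by rw [sq]; exact hss

lemma sum3 {M : Type*} [AddCommMonoid M] (f : ZMod 3 → M) : ∑ x, f x = f 0 + f 1 + f 2 := by
  show ∑ x : Fin 3, f x = _
  exact Fin.sum_univ_three f

lemma val0 : (0 : ZMod 3).val = 0 := rfl
lemma val1 : (1 : ZMod 3).val = 1 := rfl
lemma val2 : (2 : ZMod 3).val = 2 := rfl
lemma zadd01 : (0 + 1 : ZMod 3) = 1 := by decide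
lemma zadd02 : (0 + 2 : ZMod 3) = 2 := by decide
lemma zadd10 : (1 + 0 : ZMod 3) = 1 := by decide
lemma zadd20 : (2 + 0 : ZMod 3) = 2 := by decide
lemma zadd11 : (1 + 1 : ZMod 3) = 2 := by decide
lemma zadd12 : (1 + 2 : ZMod 3) = 0 := by decide
lemma zadd21 : (2 + 1 : ZMod 3) = 0 := by decide
lemma zadd22 : (2 + 2 : ZMod 3) = 1 := by decide
lemma zne01 : ((0 : ZMod 3) = 1) ↔ False := by decide
lemma zne02 : ((0 : ZMod 3) = 2) ↔ False := by decide
lemma zne10 : ((1 : ZMod 3) = 0) ↔ False := by decide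
lemma zne12 : ((1 : ZMod 3) = 2) ↔ False := by decide
lemma zne20 : ((2 : ZMod 3) = 0) ↔ False := by decide
lemma zne21 : ((2 : ZMod 3) = 1) ↔ False := by decide
lemma zneg1 : (-1 : ZMod 3) = 2 := by decide
lemma zneg2 : (-2 : ZMod 3) = 1 := by decide
lemma z3cases (x : ZMod 3) : x = 0 ∨ x = 1 ∨ x = 2 := by revert x; decide

/-! ### The qutrit Fourier (Hadamard-like) Clifford unitary -/

def Fmat : Matrix (ZMod 3) (ZMod 3) ℂ :=
  (((Real.sqrt 3)⁻¹ : ℝ) : ℂ) • Matrix.of (fun j k : ZMod 3 => ω ^ (j.val * k.val))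

lemma HW_eq (a b : ZMod 3) :
    HW 3 (a, b) = ω ^ (a.val * b.val) • (boostZ 3 ^ a.val * shiftX 3 ^ b.val) := by
  rw [HW, htauz]

set_option maxHeartbeats 1000000 in
lemma HW_ent (a b : ZMod 3) :
    HW 3 (a, b) = Matrix.of (fun r c => if r = c + b then ω ^ (a.val * b.val + a.val * r.val) else 0) := by
  rcases z3cases a with rfl | rfl | rfl <;> rcases z3cases b with rfl | rfl | rfl <;>
    (rw [HW_eq]; ext r c;
     rcases z3cases r with rfl | rfl | rfl <;> rcases z3cases c with rfl | rfl | rfl <;>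
        (simp [boostZ, shiftX, Matrix.mul_apply, sum3,
          val0, val1, val2, pow_succ, pow_zero, Matrix.diagonal, Matrix.one_apply,
          Matrix.of_apply, zadd01, zadd02, zadd10, zadd20, zadd11, zadd12, zadd21, zadd22,
          zne01, zne02, zne10, zne12, zne20, zne21, hω3, hω4, hω5, hω6, hω7, hω8]
         <;> ring))

set_option maxHeartbeats 2000000 in
lemma Fconj (a b : ZMod 3) : Fmat * HW 3 (a, b) * Fmatᴴ = HW 3 (b, -a) := by
  rcases z3cases a with rfl | rfl | rfl <;> rcases z3cases b with rfl | rfl | rfl <;>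
    (rw [HW_ent, HW_ent]; ext r c;
     rcases z3cases r with rfl | rfl | rfl <;> rcases z3cases c with rfl | rfl | rfl <;>
      (simp [Fmat, Matrix.mul_apply, sum3, Matrix.smul_apply, Matrix.conjTranspose_apply,
        Matrix.of_apply, smul_eq_mul, val0, val1, val2, zadd01, zadd02, zadd10, zadd20, zadd11,
        zadd12, zadd21, zadd22, zne01, zne02, zne10, zne12, zne20, zne21, zneg1, zneg2, neg_zero,
        hstar, Complex.conj_ofReal, star_pow] <;>
       ring_nf <;>
       simp [hω2', hω3, hω4, hω5, hω6, hω7, hω8, hω9, hω10, hω11, hω12, hω13, hω14, hω15,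
         hω16, hω17, hω18, hω19, hω20, hss, hss2, hc3] <;>
       try ring))

lemma HW00 : HW 3 (0, 0) = 1 := by
  rw [HW_ent]
  ext r c
  rcases z3cases r with rfl | rfl | rfl <;> rcases z3cases c with rfl | rfl | rfl <;>
    simp [Matrix.one_apply, Matrix.of_apply, zadd10, zadd20, zne01, zne02, zne10, zne12,
      zne20, zne21, val0]

lemma FmatUnit : Fmat * Fmatᴴ = 1 := by
  have h := Fconj 0 0
  rw [neg_zero, HW00, Matrix.mul_one] at h
  exact h

lemma FmatUnit' : Fmatᴴ * Fmat = 1 := mul_eq_one_comm.1 FmatUnit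

lemma Fclifford : IsClifford1 3 Fmat := by
  refine ⟨FmatUnit', FmatUnit, fun u => ⟨0, (u.2, -u.1), ?_⟩⟩
  rw [show ((0:ℝ):ℂ) * Complex.I = 0 by simp, Complex.exp_zero, one_smul]
  rw [show u = (u.1, u.2) from rfl]
  exact Fconj u.1 u.2

lemma idClifford : IsClifford1 3 (1 : Matrix (ZMod 3) (ZMod 3) ℂ) := by
  refine ⟨by simp, by simp, fun u => ⟨0, u, ?_⟩⟩
  simp

lemma v0_pure : IsPureStabVec 3 v0vec := by
  refine ⟨1, idClifford, ?_⟩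
  ext j
  simp [Matrix.one_mulVec, v0vec, ket0]

lemma v1_pure : IsPureStabVec 3 v1vec := by
  refine ⟨Fmat, Fclifford, ?_⟩
  ext j
  rcases z3cases j with rfl | rfl | rfl <;>
    simp [Fmat, Matrix.mulVec, dotProduct, sum3, ket0, v1vec,
      zne10, zne20, val0, val1, val2]

lemma sigma_stab : IsStabState1 3 hplusSigma := by
  refine ⟨2, ![1/2, 1/2], ![v0vec, v1vec], ?_, ?_, ?_, ?_⟩
  · intro j; fin_cases j <;> norm_num
  · simp [Fin.sum_univ_two]; norm_num
  · intro j; fin_cases j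
    · exact v0_pure
    · exact v1_pure
  · rw [Fin.sum_univ_two]
    show hplusSigma = ((1/2 : ℝ):ℂ) • _ + ((1/2 : ℝ):ℂ) • _
    rw [hplusSigma]
    push_cast
    rw [smul_add]
    norm_num

end Magic

namespace Magic

/-! ### The PSD part -/

local notation "s" => Real.sqrt 3
local notation "q" => Real.sqrt (2 * (3 + Real.sqrt 3))
local notation "k" => Real.sqrt ((3 - Real.sqrt 3) / 12)

def wwit : ZMod 3 → ℂ := fun j => ((k:ℝ):ℂ) * (if j = 0 then ((s:ℝ):ℂ) - 1 else -1)

lemma hs_nonneg : (0:ℝ) ≤ s := Real.sqrt_nonneg 3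
lemma hs_lt : s < 3 := by
  nlinarith [Real.sq_sqrt (by norm_num : (0:ℝ) ≤ 3), Real.sqrt_nonneg 3]
lemma hq_pos : (0:ℝ) < q := Real.sqrt_pos.2 (by nlinarith [hs_nonneg])
lemma hqC : (((q:ℝ)):ℂ) ^ 2 = 2 * (3 + ((s:ℝ):ℂ)) := by
  rw [← Complex.ofReal_pow, Real.sq_sqrt (by nlinarith [hs_nonneg])]
  push_cast; ring
lemma hqC0 : (((q:ℝ)):ℂ) ≠ 0 := Complex.ofReal_ne_zero.2 (ne_of_gt hq_pos)
lemma hkC : (((k:ℝ)):ℂ) ^ 2 = (3 - ((s:ℝ):ℂ)) / 12 := by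
  rw [← Complex.ofReal_pow, Real.sq_sqrt (by nlinarith [hs_lt])]
  push_cast; ring

set_option maxHeartbeats 2000000 in
lemma key_eq :
    (((3 - Real.sqrt 3 : ℝ) : ℂ)) • hplusSigma - projOf hplus
      = Matrix.vecMulVec wwit (star wwit) := by
  ext i j
  rcases z3cases i with rfl | rfl | rfl <;> rcases z3cases j with rfl | rfl | rfl <;>
    (simp [hplusSigma, projOf, hplus, wwit, v0vec, v1vec, Matrix.vecMulVec_apply,
       Matrix.sub_apply, Matrix.smul_apply, Matrix.add_apply, smul_eq_mul,
       Complex.conj_ofReal, zne01, zne02, zne10, zne12, zne20, zne21] <;>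
     simp only [show (2⁻¹:ℂ) = ((2⁻¹:ℝ):ℂ) by norm_num] <;>
     norm_cast <;>
     (have h2 : Real.sqrt 2 ^ 2 = 2 := Real.sq_sqrt (by norm_num);
      have h3p : Real.sqrt (3 + s) ^ 2 = 3 + s := Real.sq_sqrt (by positivity);
      have h3m : Real.sqrt (3 - s) ^ 2 = 3 - s := Real.sq_sqrt (by nlinarith [hs_lt]);
      have h12 : Real.sqrt 12 ^ 2 = 12 := Real.sq_sqrt (by norm_num);
      have hs2 : s ^ 2 = 3 := Real.sq_sqrt (by norm_num);
      have e2 : Real.sqrt 2 ≠ 0 := by positivity;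
      have e3p : Real.sqrt (3 + s) ≠ 0 := by positivity;
      have e12 : Real.sqrt 12 ≠ 0 := by positivity;
      have es : s ≠ 0 := by positivity;
      field_simp) <;>
     (have hsC : ((s:ℝ):ℂ)^2 = 3 := by exact_mod_cast hs2
      have hsC3 : ((s:ℝ):ℂ)^3 = 3*((s:ℝ):ℂ) := by rw [pow_succ, hsC]
      have hsC4 : ((s:ℝ):ℂ)^4 = 9 := by rw [show ((s:ℝ):ℂ)^4 = (((s:ℝ):ℂ)^2)^2 by ring, hsC]; norm_num
      have hsC5 : ((s:ℝ):ℂ)^5 = 9*((s:ℝ):ℂ) := by rw [pow_succ, hsC4]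
      have hsC6 : ((s:ℝ):ℂ)^6 = 27 := by rw [show ((s:ℝ):ℂ)^6 = (((s:ℝ):ℂ)^2)^3 by ring, hsC]; norm_num
      have esC : ((s:ℝ):ℂ) ≠ 0 := by exact_mod_cast es
      have e3C : (3:ℂ) + ((s:ℝ):ℂ) ≠ 0 := by
        have : (3:ℝ) + s ≠ 0 := by positivity
        exact_mod_cast this
      simp only [h2, h3p, h3m, h12]
      push_cast
      field_simp
      ring_nf
      simp only [hsC, hsC3, hsC4, hsC5, hsC6]
      ring_nf))


lemma key_psd :
    ((((3 - Real.sqrt 3 : ℝ) : ℂ)) • hplusSigma - projOf hplus).PosSemidef := by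
  rw [key_eq, Matrix.vecMulVec_eq Unit, ← Matrix.conjTranspose_replicateCol]
  exact Matrix.posSemidef_self_mul_conjTranspose _

/-- There is a qutrit stabilizer state σ with (3-√3)σ - |H₊⟩⟨H₊| ⪰ 0;
explicitly, σ = (1/2)(|v₀⟩⟨v₀| + |v₁⟩⟨v₁|) works, and each |v_j⟩ is a pure stabilizer
state. -/
theorem hplus_stab_witness :
    IsPureStabVec 3 v0vec ∧ IsPureStabVec 3 v1vec ∧
    IsStabState1 3 hplusSigma ∧
    ((((3 - Real.sqrt 3 : ℝ) : ℂ) • hplusSigma - projOf hplus).PosSemidef) ∧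
    ∃ σ : Matrix (ZMod 3) (ZMod 3) ℂ, IsStabState1 3 σ ∧
      ((((3 - Real.sqrt 3 : ℝ) : ℂ) • σ - projOf hplus).PosSemidef) := by
  exact ⟨v0_pure, v1_pure, sigma_stab, key_psd, hplusSigma, sigma_stab, key_psd⟩

end Magic
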